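/- Let f : ℚ̄ → [0,∞) satisfy: (f1) f(σ(α)) = f(α) for every field embedding σ of ℚ̄; and suppose there is a continuous F : ℝ² → [0,∞) with f(α+β) ≤ F(f(α), f(β)) and f(αβ) ≤ F(f(α), f(β)). Let K ⊆ ℚ̄ be a subfield, U ⊆ K, and let S ⊆ ℚ̄ be a set of roots of monic irreducible polynomials in K[x] whose coefficients lie in U and whose degrees are bounded by E. If U has the Northcott property with respect to f, then S has the Northcott property with respect to f. -/

import Mathlib

open Polynomial

/-- Iterated bound sequence: `boundSeq F X0 (n+1)` bounds `F` on `[0, boundSeq F X0 n]²`. -/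
noncomputable def boundSeq (F : ℝ × ℝ → ℝ) (X0 : ℝ) : ℕ → ℝ
  | 0 => X0
  | n + 1 => max (boundSeq F X0 n)
      (sSup (F '' (Set.Icc 0 (boundSeq F X0 n) ×ˢ Set.Icc 0 (boundSeq F X0 n))))

lemma boundSeq_mono (F : ℝ × ℝ → ℝ) (X0 : ℝ) : Monotone (boundSeq F X0) :=
  monotone_nat_of_le_succ fun n => le_max_left _ _

lemma boundSeq_F {F : ℝ × ℝ → ℝ} (hFcont : Continuous F) {X0 a b : ℝ} {n : ℕ}
    (ha0 : 0 ≤ a) (ha : a ≤ boundSeq F X0 n) (hb0 : 0 ≤ b) (hb : b ≤ boundSeq F X0 n) :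
    F (a, b) ≤ boundSeq F X0 (n + 1) := by
  refine le_trans (le_csSup ?_ ?_) (le_max_right _ _)
  · exact ((isCompact_Icc.prod isCompact_Icc).image hFcont).bddAbove
  · exact ⟨(a, b), ⟨⟨ha0, ha⟩, ⟨hb0, hb⟩⟩, rfl⟩

lemma coeff_bound (f : AlgebraicClosure ℚ → ℝ) (hf0 : ∀ α, 0 ≤ f α)
    (F : ℝ × ℝ → ℝ) (hFcont : Continuous F)
    (hadd : ∀ α β, f (α + β) ≤ F (f α, f β))
    (hmul : ∀ α β, f (α * β) ≤ F (f α, f β))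
    (X0 : ℝ) (h0 : f 0 ≤ X0) (h1 : f 1 ≤ X0) (hm1 : f (-1) ≤ X0)
    (s : Multiset (AlgebraicClosure ℚ)) (hs : ∀ r ∈ s, f r ≤ X0) (k : ℕ) :
    f (((s.map fun r => X - C r).prod).coeff k) ≤ boundSeq F X0 (3 * Multiset.card s) := by
  induction s using Multiset.induction_on generalizing k with
  | empty =>
    rcases k with _ | k
    · simpa [coeff_one, boundSeq] using h1
    · simpa [coeff_one, boundSeq] using h0
  | cons r s ih =>
    have hr : f r ≤ X0 := hs r (Multiset.mem_cons_self r s)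
    have hs' : ∀ x ∈ s, f x ≤ X0 := fun x hx => hs x (Multiset.mem_cons_of_mem hx)
    set Q : Polynomial (AlgebraicClosure ℚ) := (s.map fun r => X - C r).prod with hQ
    set n := Multiset.card s with hn
    set B := boundSeq F X0 with hB
    have hX0B : ∀ m : ℕ, X0 ≤ B m := fun m => boundSeq_mono F X0 (Nat.zero_le m)
    have hcard : 3 * Multiset.card (r ::ₘ s) = 3 * n + 3 := by
      rw [Multiset.card_cons]; ring
    rw [Multiset.map_cons, Multiset.prod_cons, hcard]
    have hco : ((X - C r) * Q).coeff k = (X * Q).coeff k + (-r) * Q.coeff k := by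
      rw [show (X - C r) * Q = X * Q + -(C r * Q) by ring, coeff_add, coeff_neg, coeff_C_mul,
        neg_mul]
    have hXQ : f ((X * Q).coeff k) ≤ B (3 * n + 2) := by
      rcases k with _ | k
      · simpa [mul_coeff_zero] using h0.trans (hX0B _)
      · rw [coeff_X_mul]
        exact (ih hs' k).trans (boundSeq_mono F X0 (by omega))
    have hfr : f (-r) ≤ B (3 * n + 1) := by
      calc f (-r) = f ((-1) * r) := by rw [neg_one_mul]
        _ ≤ F (f (-1), f r) := hmul _ _
        _ ≤ B (3 * n + 1) :=
          boundSeq_F hFcont (hf0 _) (hm1.trans (hX0B _)) (hf0 _) (hr.trans (hX0B _))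
    have hprod : f ((-r) * Q.coeff k) ≤ B (3 * n + 2) :=
      (hmul _ _).trans (boundSeq_F hFcont (hf0 _) hfr (hf0 _)
        ((ih hs' k).trans (boundSeq_mono F X0 (by omega))))
    rw [hco]
    exact (hadd _ _).trans (boundSeq_F hFcont (hf0 _) hXQ (hf0 _) hprod)

/-- (Dvornicich–Zannier.) Suppose `f : ℚ̄ → [0,∞)` is invariant under all
field embeddings of `ℚ̄`, and there is a continuous `F : ℝ² → ℝ` bounding `f` on sums and
products. Let `K ⊆ ℚ̄` be a subfield, `U ⊆ K`, and `S` a set of roots of monic irreducible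
polynomials in `K[x]` with coefficients in `U` and degree at most `E`. If `U` has the
Northcott property w.r.t. `f`, then so does `S`. -/
theorem stmt14 (f : AlgebraicClosure ℚ → ℝ) (hf0 : ∀ α, 0 ≤ f α)
    (hconj : ∀ (σ : AlgebraicClosure ℚ →+* AlgebraicClosure ℚ) (α), f (σ α) = f α)
    (F : ℝ × ℝ → ℝ) (hFcont : Continuous F) (hFnonneg : ∀ x, 0 ≤ F x)
    (hadd : ∀ α β, f (α + β) ≤ F (f α, f β))
    (hmul : ∀ α β, f (α * β) ≤ F (f α, f β))
    (K : Subfield (AlgebraicClosure ℚ)) (U : Set (AlgebraicClosure ℚ)) (hUK : U ⊆ K)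
    (E : ℕ) (S : Set (AlgebraicClosure ℚ))
    (hS : ∀ α ∈ S, ∃ P : Polynomial K, P.Monic ∧ Irreducible P ∧
      P.natDegree ≤ E ∧ (∀ k < P.natDegree, ((P.coeff k : AlgebraicClosure ℚ)) ∈ U) ∧
      Polynomial.eval₂ K.subtype α P = 0)
    (hU : ∀ X : ℝ, {u ∈ U | f u < X}.Finite) :
    ∀ X : ℝ, {α ∈ S | f α < X}.Finite := by
  intro X
  haveI : Algebra.IsAlgebraic K (AlgebraicClosure ℚ) := by
    have : Algebra.IsAlgebraic ℚ (AlgebraicClosure ℚ) := by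
      rw [Subsingleton.elim (DivisionRing.toRatAlgebra : Algebra ℚ (AlgebraicClosure ℚ)) (AlgebraicClosure.instAlgebra ℚ)]
      exact AlgebraicClosure.isAlgebraic ℚ
    exact Algebra.IsAlgebraic.tower_top (K := ℚ) K
  haveI : IsAlgClosure K (AlgebraicClosure ℚ) := ⟨inferInstance, inferInstance⟩
  set X0 : ℝ := max X (max (f 0) (max (f 1) (f (-1)))) with hX0def
  set B : ℝ := boundSeq F X0 (3 * E) + 1 with hBdef
  set T : Set (AlgebraicClosure ℚ) := {u ∈ U | f u < B} ∪ {0, 1} with hTdef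
  have hT : T.Finite := (hU B).union ((Set.finite_singleton 1).insert 0)
  set Pset : Set (Polynomial (AlgebraicClosure ℚ)) :=
    {p | p.Monic ∧ p.natDegree ≤ E ∧ ∀ k, p.coeff k ∈ T} with hPsetdef
  have hPset : Pset.Finite := by
    have hpi : {g : Fin (E + 1) → AlgebraicClosure ℚ | ∀ i, g i ∈ T}.Finite := by
      have := Set.Finite.pi (fun _ : Fin (E + 1) => hT)
      refine this.subset fun g hg => ?_
      simp only [Set.mem_pi, Set.mem_univ, forall_true_left]
      exact fun i => hg i
    refine Set.Finite.of_finite_image (f := fun p => fun i : Fin (E + 1) => p.coeff i)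
      (hpi.subset ?_) ?_
    · rintro _ ⟨p, hp, rfl⟩ i
      exact hp.2.2 i
    · intro p hp q hq hpq
      ext k
      by_cases hk : k ≤ E
      · exact congrFun hpq ⟨k, by omega⟩
      · rw [coeff_eq_zero_of_natDegree_lt (lt_of_le_of_lt hp.2.1 (by omega)),
          coeff_eq_zero_of_natDegree_lt (lt_of_le_of_lt hq.2.1 (by omega))]
  have cover : {α ∈ S | f α < X} ⊆ ⋃ p ∈ Pset, {x | p.IsRoot x} := by
    rintro α ⟨hαS, hαX⟩
    obtain ⟨P, hMonic, hIrr, hdeg, hcoeff, heval0⟩ := hS α hαS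
    set Q : Polynomial (AlgebraicClosure ℚ) := P.map (algebraMap K (AlgebraicClosure ℚ))
      with hQdef
    have haeval : Polynomial.aeval α P = 0 := heval0
    have hQα : Q.IsRoot α := by
      show Q.eval α = 0
      rw [eval_map, ← aeval_def, haeval]
    have hQmonic : Q.Monic := hMonic.map _
    have hQdeg : Q.natDegree = P.natDegree := natDegree_map _
    have hmin : minpoly K α = P := (minpoly.eq_of_irreducible_of_monic hIrr haeval hMonic).symm
    -- every root of Q has the same f-value as α
    have hroot : ∀ r ∈ Q.roots, f r ≤ X0 := by
      intro r hr
      have hre : Polynomial.aeval r (minpoly K α) = 0 := by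
        rw [hmin, aeval_def, ← eval_map]
        exact isRoot_of_mem_roots hr
      obtain ⟨σ, hσ⟩ := minpoly.exists_algEquiv_of_root (Algebra.IsAlgebraic.isAlgebraic α) hre
      have : f (σ.toAlgHom.toRingHom r) = f r := hconj _ r
      have hfr : f r = f α := by
        rw [← this]
        show f (σ r) = f α
        rw [hσ]
      rw [hfr]
      exact (le_of_lt hαX).trans (le_max_left _ _)
    have hsplit : Q = (Q.roots.map fun a => Polynomial.X - C a).prod :=
      (IsAlgClosed.splits Q).eq_prod_roots_of_monic hQmonic
    have hcardroots : Multiset.card Q.roots ≤ E := (Q.card_roots').trans (hQdeg ▸ hdeg)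
    have hcb : ∀ k, f (Q.coeff k) ≤ boundSeq F X0 (3 * E) := by
      intro k
      have := coeff_bound f hf0 F hFcont hadd hmul X0
        ((le_max_left _ _).trans (le_max_right _ _))
        (((le_max_left _ _).trans (le_max_right _ _)).trans (le_max_right _ _))
        ((le_max_right _ _).trans ((le_max_right _ _).trans (le_max_right _ _)))
        Q.roots hroot k
      rw [← hsplit] at this
      exact this.trans (boundSeq_mono F X0 (by omega))
    have hQPset : Q ∈ Pset := by
      refine ⟨hQmonic, hQdeg ▸ hdeg, fun k => ?_⟩
      rcases lt_trichotomy k P.natDegree with hk | hk | hk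
      · left
        refine ⟨?_, lt_of_le_of_lt (hcb k) (by rw [hBdef]; linarith)⟩
        have : Q.coeff k = (P.coeff k : AlgebraicClosure ℚ) := coeff_map _ k
        rw [this]
        exact hcoeff k hk
      · right
        have : Q.coeff k = 1 := by
          rw [hk, ← hQdeg]
          exact hQmonic.coeff_natDegree
        rw [this]
        exact Set.mem_insert_of_mem _ rfl
      · right
        have : Q.coeff k = 0 := coeff_eq_zero_of_natDegree_lt (hQdeg ▸ hk)
        rw [this]
        exact Set.mem_insert _ _
    exact Set.mem_biUnion hQPset hQα
  exact Set.Finite.subset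
    (hPset.biUnion fun p hp => p.finite_setOf_isRoot hp.1.ne_zero) cover
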